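/- The operator T has a unique fixed point (f_0, h_0) ∈ 𝓕 × 𝓗; that is, there exists exactly one pair of continuous functions f_0 : [x_0^1, x_N^1] → ℝ² and h_0 : [x_0^2, x_M^2] → ℝ² with the prescribed endpoint values such that T(f_0, h_0) = (f_0, h_0). -/

import Mathlib

open Set


/-- Every point of `Icc (X 0) (X N)` lies in some subinterval. -/
lemma myCover (X : ℕ → ℝ) : ∀ N, 1 ≤ N → ∀ x ∈ Icc (X 0) (X N),
    ∃ n, 1 ≤ n ∧ n ≤ N ∧ x ∈ Icc (X (n - 1)) (X n) := by
  intro N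
  induction N with
  | zero => omega
  | succ k ih =>
    intro _ x hx
    rcases Nat.eq_zero_or_pos k with h | h
    · subst h
      exact ⟨1, le_refl 1, le_refl 1, hx⟩
    · by_cases hxk : x ≤ X k
      · obtain ⟨n, h1, h2, h3⟩ := ih (by omega) x ⟨hx.1, hxk⟩
        exact ⟨n, h1, by omega, h3⟩
      · exact ⟨k + 1, by omega, le_refl _, ⟨by simpa using le_of_not_ge hxk, hx.2⟩⟩

/-- Glue finitely many globally continuous pieces along knots. -/
lemma myGlue (X : ℕ → ℝ) (G : ℕ → ℝ → ℝ) :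
    ∀ N, 1 ≤ N →
    (∀ n, 1 ≤ n → n ≤ N → Continuous (G n)) →
    (∀ n, 1 ≤ n → n < N → G n (X n) = G (n + 1) (X n)) →
    (∀ n, n < N → X n ≤ X (n + 1)) →
    ∃ g : ℝ → ℝ, Continuous g ∧
      ∀ n, 1 ≤ n → n ≤ N → ∀ x ∈ Icc (X (n - 1)) (X n), g x = G n x := by
  intro N
  induction N with
  | zero => omega
  | succ k ih =>
    intro _ hGc hmatch hmono
    rcases Nat.eq_zero_or_pos k with hk | hk
    · subst hk
      exact ⟨G 1, hGc 1 le_rfl le_rfl, by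
        intro n h1 h2 x hx
        have : n = 1 := by omega
        subst this; rfl⟩
    · obtain ⟨g, hgc, hgv⟩ := ih hk (fun n h1 h2 => hGc n h1 (by omega))
        (fun n h1 h2 => hmatch n h1 (by omega)) (fun n hn => hmono n (by omega))
      have hXmono : ∀ i j, i ≤ j → j ≤ k + 1 → X i ≤ X j := by
        intro i j hij hjk
        induction j with
        | zero => simpa [Nat.le_zero.mp hij]
        | succ m ihm =>
          rcases Nat.eq_or_lt_of_le hij with h | h
          · simp [h]
          · exact le_trans (ihm (by omega) (by omega)) (hmono m (by omega))
      refine ⟨fun x => if x ≤ X k then g x else G (k + 1) x, ?_, ?_⟩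
      · exact Continuous.if_le hgc (hGc (k + 1) (by omega) le_rfl) continuous_id
          continuous_const (fun x hxk => by
            rw [hxk]
            rw [hgv k hk le_rfl (X k) ⟨hXmono (k - 1) k (by omega) (by omega), le_rfl⟩]
            exact hmatch k hk (by omega))
      · intro n h1 h2 x hx
        by_cases hn : n ≤ k
        · have hxle : x ≤ X k := le_trans hx.2 (hXmono n k hn (by omega))
          simp only [if_pos hxle]
          exact hgv n h1 hn x hx
        · have hn1 : n = k + 1 := by omega
          subst hn1
          by_cases hxle : x ≤ X k
          · have hxe : x = X k := le_antisymm hxle (by simpa using hx.1)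
            simp only [hxe, if_pos le_rfl]
            rw [hgv k hk le_rfl (X k) ⟨hXmono (k - 1) k (by omega) (by omega), le_rfl⟩]
            exact hmatch k hk (by omega)
          · simp only [if_neg hxle]

lemma myAffine {s0 s1 P Q A B : ℝ} (hs : s0 < s1) (hPQ : P < Q)
    (h0 : A * s0 + B = P) (h1 : A * s1 + B = Q) :
    0 < A ∧ (∀ t ∈ Icc s0 s1, A * t + B ∈ Icc P Q) ∧
      (∀ x ∈ Icc P Q, ∃ t ∈ Icc s0 s1, x = A * t + B) := by
  have hA : A * (s1 - s0) = Q - P := by ring_nf; nlinarith [h0, h1]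
  have hApos : 0 < A := by
    have := sub_pos.mpr hPQ
    have := sub_pos.mpr hs
    nlinarith
  refine ⟨hApos, ?_, ?_⟩
  · intro t ht
    constructor
    · nlinarith [ht.1]
    · nlinarith [ht.2]
  · intro x hx
    refine ⟨(x - B) / A, ⟨?_, ?_⟩, ?_⟩
    · rw [le_div_iff₀ hApos]; nlinarith [hx.1]
    · rw [div_le_iff₀ hApos]; nlinarith [hx.2]
    · field_simp
      ring

lemma mySup (N M : ℕ) (hN : 1 ≤ N) (hMle : 1 ≤ M) (v : Fin 2 → Fin 2 → ℕ → ℝ)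
    (K : Fin 2 → Fin 2 → ℕ)
    (hK00 : K 0 0 ≤ N) (hK01 : K 0 1 ≤ N) (hK10 : K 1 0 ≤ M) (hK11 : K 1 1 ≤ M)
    (hv : ∀ r s n, 1 ≤ n → n ≤ K r s → |v r s n| < 1) :
    ∃ q : ℝ, 0 ≤ q ∧ q < 1 ∧ ∀ r s n, 1 ≤ n → n ≤ K r s → |v r s n| ≤ q := by
  classical
  set F : ℕ → ℝ := fun n =>
    max (max (if n ≤ K 0 0 then |v 0 0 n| else 0) (if n ≤ K 0 1 then |v 0 1 n| else 0))
        (max (if n ≤ K 1 0 then |v 1 0 n| else 0) (if n ≤ K 1 1 then |v 1 1 n| else 0)) with hF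
  have hne : (Finset.Icc 1 (N + M)).Nonempty := ⟨1, by simp; omega⟩
  refine ⟨(Finset.Icc 1 (N + M)).sup' hne F, ?_, ?_, ?_⟩
  · refine le_trans ?_ (Finset.le_sup' F (by simp; omega : 1 ∈ Finset.Icc 1 (N + M)))
    rw [hF]
    have h1 : (0:ℝ) ≤ if 1 ≤ K 0 0 then |v 0 0 1| else 0 := by positivity
    exact le_trans h1 (le_trans (le_max_left _ _) (le_max_left _ _))
  · rw [Finset.sup'_lt_iff]
    intro n hn
    simp only [Finset.mem_Icc] at hn
    have honel : (0:ℝ) < 1 := one_pos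
    refine max_lt (max_lt ?_ ?_) (max_lt ?_ ?_) <;>
      · split
        · exact hv _ _ n hn.1 (by assumption)
        · exact honel
  · intro r s n h1 h2
    have hmem : n ∈ Finset.Icc 1 (N + M) := by
      simp only [Finset.mem_Icc]
      refine ⟨h1, ?_⟩
      fin_cases r <;> fin_cases s <;> simp only [Fin.zero_eta, Fin.mk_one] at h2 <;> omega
    refine le_trans ?_ (Finset.le_sup' F hmem)
    rw [hF]
    fin_cases r <;> fin_cases s <;> simp only
    · exact le_trans (le_of_eq (if_pos h2).symm) (le_trans (le_max_left _ _) (le_max_left _ _))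
    · exact le_trans (le_of_eq (if_pos h2).symm) (le_trans (le_max_right _ _) (le_max_left _ _))
    · exact le_trans (le_of_eq (if_pos h2).symm) (le_trans (le_max_left _ _) (le_max_right _ _))
    · exact le_trans (le_of_eq (if_pos h2).symm) (le_trans (le_max_right _ _) (le_max_right _ _))

lemma myRow (Ka Kb Ntot : ℕ) (hsplit : Ka + Kb = Ntot) (hNtot : 1 ≤ Ntot)
    (X : ℕ → ℝ) (hX : ∀ n, n < Ntot → X n < X (n + 1))
    (s0a s1a s0b s1b : ℝ) (hsa : s0a < s1a) (hsb : s0b < s1b)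
    (A B Al A' B' Al' : ℕ → ℝ) (Rf Rf' : ℕ → ℝ → ℝ) (dat : ℕ → ℝ)
    (U U' : ℝ → ℝ) (hU : Continuous U) (hU' : Continuous U')
    (hRf : ∀ n, Continuous (Rf n)) (hRf' : ∀ n, Continuous (Rf' n))
    (ha : ∀ n, 1 ≤ n → n ≤ Ka →
      A n * s0a + B n = X (n - 1) ∧ A n * s1a + B n = X n ∧
      Al n * U s0a + Rf n s0a = dat (n - 1) ∧
      Al n * U s1a + Rf n s1a = dat n)
    (hb : ∀ n, 1 ≤ n → n ≤ Kb →
      A' n * s0b + B' n = X (Ka + n - 1) ∧ A' n * s1b + B' n = X (Ka + n) ∧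
      Al' n * U' s0b + Rf' n s0b = dat (Ka + n - 1) ∧
      Al' n * U' s1b + Rf' n s1b = dat (Ka + n)) :
    ∃ g : ℝ → ℝ, Continuous g ∧
      (∀ n, 1 ≤ n → n ≤ Ka → ∀ t ∈ Icc s0a s1a,
        A n * t + B n ∈ Icc (X 0) (X Ntot) ∧
        g (A n * t + B n) = Al n * U t + Rf n t) ∧
      (∀ n, 1 ≤ n → n ≤ Kb → ∀ t ∈ Icc s0b s1b,
        A' n * t + B' n ∈ Icc (X 0) (X Ntot) ∧
        g (A' n * t + B' n) = Al' n * U' t + Rf' n t) ∧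
      (∀ x ∈ Icc (X 0) (X Ntot),
        (∃ n, 1 ≤ n ∧ n ≤ Ka ∧ ∃ t ∈ Icc s0a s1a, x = A n * t + B n) ∨
        (∃ n, 1 ≤ n ∧ n ≤ Kb ∧ ∃ t ∈ Icc s0b s1b, x = A' n * t + B' n)) ∧
      g (X 0) = dat 0 ∧ g (X Ntot) = dat Ntot := by
  classical
  have hXlt : ∀ n, 1 ≤ n → n ≤ Ntot → X (n - 1) < X n := by
    intro n h1 h2
    have h := hX (n - 1) (by omega)
    have he : n - 1 + 1 = n := by omega
    rwa [he] at h
  have hKaN : Ka ≤ Ntot := by omega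
  have hXmono : ∀ i j, i ≤ j → j ≤ Ntot → X i ≤ X j := by
    intro i j hij hjk
    induction j with
    | zero => simp [Nat.le_zero.mp hij]
    | succ m ihm =>
      rcases Nat.eq_or_lt_of_le hij with h | h
      · simp [h]
      · exact le_trans (ihm (by omega) (by omega)) (hX m (by omega)).le
  set G : ℕ → ℝ → ℝ := fun n x =>
    if n ≤ Ka then
      Al n * U ((x - B n) / A n) + Rf n ((x - B n) / A n)
    else
      Al' (n - Ka) * U' ((x - B' (n - Ka)) / A' (n - Ka)) +
        Rf' (n - Ka) ((x - B' (n - Ka)) / A' (n - Ka)) with hG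
  have hGc : ∀ n, 1 ≤ n → n ≤ Ntot → Continuous (G n) := by
    intro n _ _
    rw [hG]
    dsimp only
    split
    · exact Continuous.add (continuous_const.mul (hU.comp (by fun_prop)))
        ((hRf n).comp (by fun_prop))
    · exact Continuous.add (continuous_const.mul (hU'.comp (by fun_prop)))
        ((hRf' (n - Ka)).comp (by fun_prop))
  have haff : ∀ n, 1 ≤ n → n ≤ Ka → 0 < A n ∧
      (∀ t ∈ Icc s0a s1a, A n * t + B n ∈ Icc (X (n - 1)) (X n)) ∧
      (∀ x ∈ Icc (X (n - 1)) (X n), ∃ t ∈ Icc s0a s1a, x = A n * t + B n) := by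
    intro n h1 h2
    obtain ⟨e0, e1, _, _⟩ := ha n h1 h2
    exact myAffine hsa (hXlt n h1 (by omega)) e0 e1
  have haff' : ∀ n, 1 ≤ n → n ≤ Kb → 0 < A' n ∧
      (∀ t ∈ Icc s0b s1b, A' n * t + B' n ∈ Icc (X (Ka + n - 1)) (X (Ka + n))) ∧
      (∀ x ∈ Icc (X (Ka + n - 1)) (X (Ka + n)), ∃ t ∈ Icc s0b s1b, x = A' n * t + B' n) := by
    intro n h1 h2
    obtain ⟨e0, e1, _, _⟩ := hb n h1 h2
    have := hXlt (Ka + n) (by omega) (by omega)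
    exact myAffine hsb this e0 e1
  have hGvala : ∀ n, 1 ≤ n → n ≤ Ka → ∀ t : ℝ,
      G n (A n * t + B n) = Al n * U t + Rf n t := by
    intro n h1 h2 t
    have hA := (haff n h1 h2).1
    have ht : (A n * t + B n - B n) / A n = t := by field_simp; ring
    rw [hG]
    simp only [if_pos h2, ht]
  have hGvalb : ∀ n, 1 ≤ n → n ≤ Kb → ∀ t : ℝ,
      G (Ka + n) (A' n * t + B' n) = Al' n * U' t + Rf' n t := by
    intro n h1 h2 t
    have hA := (haff' n h1 h2).1
    have ht : (A' n * t + B' n - B' n) / A' n = t := by field_simp; ring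
    have hnot : ¬ (Ka + n ≤ Ka) := by omega
    have hsub : Ka + n - Ka = n := by omega
    rw [hG]
    simp only [if_neg hnot, hsub, ht]
  have hGknot : ∀ n, 1 ≤ n → n ≤ Ntot → G n (X (n - 1)) = dat (n - 1) ∧ G n (X n) = dat n := by
    intro n h1 h2
    by_cases hn : n ≤ Ka
    · obtain ⟨e0, e1, v0, v1⟩ := ha n h1 hn
      constructor
      · rw [← e0, hGvala n h1 hn s0a, v0]
      · rw [← e1, hGvala n h1 hn s1a, v1]
    · set m := n - Ka with hm
      have hm1 : 1 ≤ m := by omega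
      have hm2 : m ≤ Kb := by omega
      have hn' : n = Ka + m := by omega
      obtain ⟨e0, e1, v0, v1⟩ := hb m hm1 hm2
      constructor
      · have h' : n - 1 = Ka + m - 1 := by omega
        rw [h', ← e0, hn', hGvalb m hm1 hm2 s0b, v0]
      · rw [hn', ← e1, hGvalb m hm1 hm2 s1b, v1]
  obtain ⟨g, hgc, hgv⟩ := myGlue X G Ntot hNtot hGc
    (fun n h1 h2 => by
      rw [(hGknot n h1 (by omega)).2]
      have := (hGknot (n + 1) (by omega) (by omega)).1
      simpa using this.symm)
    (fun n hn => (hX n hn).le)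
  have hga : ∀ n, 1 ≤ n → n ≤ Ka → ∀ t ∈ Icc s0a s1a,
      A n * t + B n ∈ Icc (X 0) (X Ntot) ∧
      g (A n * t + B n) = Al n * U t + Rf n t := by
    intro n h1 h2 t ht
    have hx := (haff n h1 h2).2.1 t ht
    refine ⟨⟨le_trans (hXmono 0 (n - 1) (by omega) (by omega)) hx.1,
      le_trans hx.2 (hXmono n Ntot (by omega) le_rfl)⟩, ?_⟩
    rw [hgv n h1 (by omega) _ hx, hGvala n h1 h2 t]
  have hgb : ∀ n, 1 ≤ n → n ≤ Kb → ∀ t ∈ Icc s0b s1b,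
      A' n * t + B' n ∈ Icc (X 0) (X Ntot) ∧
      g (A' n * t + B' n) = Al' n * U' t + Rf' n t := by
    intro n h1 h2 t ht
    have hx := (haff' n h1 h2).2.1 t ht
    have h' : Ka + n - 1 = (Ka + n) - 1 := rfl
    refine ⟨⟨le_trans (hXmono 0 (Ka + n - 1) (by omega) (by omega)) hx.1,
      le_trans hx.2 (hXmono (Ka + n) Ntot (by omega) le_rfl)⟩, ?_⟩
    rw [hgv (Ka + n) (by omega) (by omega) _ (by rw [h'] at hx; exact hx),
      hGvalb n h1 h2 t]
  refine ⟨g, hgc, hga, hgb, ?_, ?_, ?_⟩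
  · intro x hx
    obtain ⟨n, h1, h2, hmem⟩ := myCover X Ntot hNtot x hx
    by_cases hn : n ≤ Ka
    · obtain ⟨t, ht, hxt⟩ := (haff n h1 hn).2.2 x hmem
      exact Or.inl ⟨n, h1, hn, t, ht, hxt⟩
    · set m := n - Ka with hm
      have hm1 : 1 ≤ m := by omega
      have hm2 : m ≤ Kb := by omega
      have h' : Ka + m - 1 = n - 1 := by omega
      have h'' : Ka + m = n := by omega
      obtain ⟨t, ht, hxt⟩ := (haff' m hm1 hm2).2.2 x (by rw [h', h'']; exact hmem)
      exact Or.inr ⟨m, hm1, hm2, t, ht, hxt⟩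
  · rcases Nat.eq_zero_or_pos Ka with h0 | h0
    · have hb1 : 1 ≤ Kb := by omega
      obtain ⟨e0, _, v0, _⟩ := hb 1 le_rfl hb1
      have h' : Ka + 1 - 1 = 0 := by omega
      rw [h'] at e0 v0
      have := (hgb 1 le_rfl hb1 s0b ⟨le_rfl, hsb.le⟩).2
      rw [e0] at this
      exact this.trans v0
    · obtain ⟨e0, _, v0, _⟩ := ha 1 le_rfl h0
      have := (hga 1 le_rfl h0 s0a ⟨le_rfl, hsa.le⟩).2
      rw [e0] at this
      simpa using this.trans v0
  · rcases Nat.eq_zero_or_pos Kb with h0 | h0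
    · obtain ⟨_, e1, _, v1⟩ := ha Ntot (by omega) (by omega)
      have := (hga Ntot (by omega) (by omega) s1a ⟨hsa.le, le_rfl⟩).2
      rw [e1] at this
      exact this.trans v1
    · obtain ⟨_, e1, _, v1⟩ := hb Kb h0 le_rfl
      have := (hgb Kb h0 le_rfl s1b ⟨hsb.le, le_rfl⟩).2
      rw [e1, hsplit] at this
      rw [this]
      rw [hsplit] at v1
      exact v1

lemma myBanach
    (N M : ℕ) (hN : 1 ≤ N) (hM : 1 ≤ M)
    (X1 X2 : ℕ → ℝ) (hX1 : ∀ n, n < N → X1 n < X1 (n + 1))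
    (hX2 : ∀ n, n < M → X2 n < X2 (n + 1))
    (K00 K01 K10 K11 : ℕ) (hK1 : K00 + K01 = N) (hK2 : K10 + K11 = M)
    (A00 B00 Al00 A01 B01 Al01 A10 B10 Al10 A11 B11 Al11 : ℕ → ℝ)
    (R00 R01 R10 R11 : ℕ → ℝ → ℝ)
    (hR00 : ∀ n, Continuous (R00 n)) (hR01 : ∀ n, Continuous (R01 n))
    (hR10 : ∀ n, Continuous (R10 n)) (hR11 : ∀ n, Continuous (R11 n))
    (q : ℝ) (hq0 : 0 ≤ q) (hq1 : q < 1)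
    (hAl00 : ∀ n, 1 ≤ n → n ≤ K00 → |Al00 n| ≤ q)
    (hAl01 : ∀ n, 1 ≤ n → n ≤ K01 → |Al01 n| ≤ q)
    (hAl10 : ∀ n, 1 ≤ n → n ≤ K10 → |Al10 n| ≤ q)
    (hAl11 : ∀ n, 1 ≤ n → n ≤ K11 → |Al11 n| ≤ q)
    (dat1 dat2 : ℕ → ℝ)
    (hj00 : ∀ n, 1 ≤ n → n ≤ K00 →
      A00 n * X1 0 + B00 n = X1 (n - 1) ∧ A00 n * X1 N + B00 n = X1 n ∧
      Al00 n * dat1 0 + R00 n (X1 0) = dat1 (n - 1) ∧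
      Al00 n * dat1 N + R00 n (X1 N) = dat1 n)
    (hj01 : ∀ n, 1 ≤ n → n ≤ K01 →
      A01 n * X2 0 + B01 n = X1 (K00 + n - 1) ∧ A01 n * X2 M + B01 n = X1 (K00 + n) ∧
      Al01 n * dat2 0 + R01 n (X2 0) = dat1 (K00 + n - 1) ∧
      Al01 n * dat2 M + R01 n (X2 M) = dat1 (K00 + n))
    (hj10 : ∀ n, 1 ≤ n → n ≤ K10 →
      A10 n * X1 0 + B10 n = X2 (n - 1) ∧ A10 n * X1 N + B10 n = X2 n ∧
      Al10 n * dat1 0 + R10 n (X1 0) = dat2 (n - 1) ∧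
      Al10 n * dat1 N + R10 n (X1 N) = dat2 n)
    (hj11 : ∀ n, 1 ≤ n → n ≤ K11 →
      A11 n * X2 0 + B11 n = X2 (K10 + n - 1) ∧ A11 n * X2 M + B11 n = X2 (K10 + n) ∧
      Al11 n * dat2 0 + R11 n (X2 0) = dat2 (K10 + n - 1) ∧
      Al11 n * dat2 M + R11 n (X2 M) = dat2 (K10 + n)) :
    ∃ φ ψ : ℝ → ℝ, Continuous φ ∧ Continuous ψ ∧
      φ (X1 0) = dat1 0 ∧ φ (X1 N) = dat1 N ∧
      ψ (X2 0) = dat2 0 ∧ ψ (X2 M) = dat2 M ∧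
      (∀ n, 1 ≤ n → n ≤ K00 → ∀ t ∈ Icc (X1 0) (X1 N),
        A00 n * t + B00 n ∈ Icc (X1 0) (X1 N) ∧
        φ (A00 n * t + B00 n) = Al00 n * φ t + R00 n t) ∧
      (∀ n, 1 ≤ n → n ≤ K01 → ∀ t ∈ Icc (X2 0) (X2 M),
        A01 n * t + B01 n ∈ Icc (X1 0) (X1 N) ∧
        φ (A01 n * t + B01 n) = Al01 n * ψ t + R01 n t) ∧
      (∀ n, 1 ≤ n → n ≤ K10 → ∀ t ∈ Icc (X1 0) (X1 N),
        A10 n * t + B10 n ∈ Icc (X2 0) (X2 M) ∧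
        ψ (A10 n * t + B10 n) = Al10 n * φ t + R10 n t) ∧
      (∀ n, 1 ≤ n → n ≤ K11 → ∀ t ∈ Icc (X2 0) (X2 M),
        A11 n * t + B11 n ∈ Icc (X2 0) (X2 M) ∧
        ψ (A11 n * t + B11 n) = Al11 n * ψ t + R11 n t) ∧
      (∀ x ∈ Icc (X1 0) (X1 N),
        (∃ n, 1 ≤ n ∧ n ≤ K00 ∧ ∃ t ∈ Icc (X1 0) (X1 N), x = A00 n * t + B00 n) ∨
        (∃ n, 1 ≤ n ∧ n ≤ K01 ∧ ∃ t ∈ Icc (X2 0) (X2 M), x = A01 n * t + B01 n)) ∧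
      (∀ x ∈ Icc (X2 0) (X2 M),
        (∃ n, 1 ≤ n ∧ n ≤ K10 ∧ ∃ t ∈ Icc (X1 0) (X1 N), x = A10 n * t + B10 n) ∨
        (∃ n, 1 ≤ n ∧ n ≤ K11 ∧ ∃ t ∈ Icc (X2 0) (X2 M), x = A11 n * t + B11 n)) ∧
      (∀ φ' ψ' : ℝ → ℝ,
        ContinuousOn φ' (Icc (X1 0) (X1 N)) → ContinuousOn ψ' (Icc (X2 0) (X2 M)) →
        φ' (X1 0) = dat1 0 → φ' (X1 N) = dat1 N →
        ψ' (X2 0) = dat2 0 → ψ' (X2 M) = dat2 M →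
        (∀ n, 1 ≤ n → n ≤ K00 → ∀ t ∈ Icc (X1 0) (X1 N),
          φ' (A00 n * t + B00 n) = Al00 n * φ' t + R00 n t) →
        (∀ n, 1 ≤ n → n ≤ K01 → ∀ t ∈ Icc (X2 0) (X2 M),
          φ' (A01 n * t + B01 n) = Al01 n * ψ' t + R01 n t) →
        (∀ n, 1 ≤ n → n ≤ K10 → ∀ t ∈ Icc (X1 0) (X1 N),
          ψ' (A10 n * t + B10 n) = Al10 n * φ' t + R10 n t) →
        (∀ n, 1 ≤ n → n ≤ K11 → ∀ t ∈ Icc (X2 0) (X2 M),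
          ψ' (A11 n * t + B11 n) = Al11 n * ψ' t + R11 n t) →
        (∀ x ∈ Icc (X1 0) (X1 N), φ' x = φ x) ∧
        (∀ x ∈ Icc (X2 0) (X2 M), ψ' x = ψ x)) := by
  classical
  have hX1mono : ∀ i j, i ≤ j → j ≤ N → X1 i ≤ X1 j := by
    intro i j hij hjk
    induction j with
    | zero => simp [Nat.le_zero.mp hij]
    | succ m ihm =>
      rcases Nat.eq_or_lt_of_le hij with h | h
      · simp [h]
      · exact le_trans (ihm (by omega) (by omega)) (hX1 m (by omega)).le
  have hX2mono : ∀ i j, i ≤ j → j ≤ M → X2 i ≤ X2 j := by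
    intro i j hij hjk
    induction j with
    | zero => simp [Nat.le_zero.mp hij]
    | succ m ihm =>
      rcases Nat.eq_or_lt_of_le hij with h | h
      · simp [h]
      · exact le_trans (ihm (by omega) (by omega)) (hX2 m (by omega)).le
  have h1lt : X1 0 < X1 N := lt_of_lt_of_le (hX1 0 (by omega)) (hX1mono 1 N hN le_rfl)
  have h2lt : X2 0 < X2 M := lt_of_lt_of_le (hX2 0 (by omega)) (hX2mono 1 M hM le_rfl)
  have h1le : X1 0 ≤ X1 N := h1lt.le
  have h2le : X2 0 ≤ X2 M := h2lt.le
  set I1 : Set ℝ := Icc (X1 0) (X1 N) with hI1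
  set I2 : Set ℝ := Icc (X2 0) (X2 M) with hI2
  have hm10 : X1 0 ∈ I1 := left_mem_Icc.mpr h1le
  have hm1N : X1 N ∈ I1 := right_mem_Icc.mpr h1le
  have hm20 : X2 0 ∈ I2 := left_mem_Icc.mpr h2le
  have hm2M : X2 M ∈ I2 := right_mem_Icc.mpr h2le
  -- the space
  set Sset : Set (C(↥I1, ℝ) × C(↥I2, ℝ)) :=
    {p | p.1 ⟨X1 0, hm10⟩ = dat1 0 ∧ p.1 ⟨X1 N, hm1N⟩ = dat1 N ∧
         p.2 ⟨X2 0, hm20⟩ = dat2 0 ∧ p.2 ⟨X2 M, hm2M⟩ = dat2 M} with hSset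
  have hSclosed : IsClosed Sset := by
    apply IsClosed.inter
    · exact isClosed_eq ((continuous_eval_const _).comp continuous_fst)
        continuous_const
    apply IsClosed.inter
    · exact isClosed_eq ((continuous_eval_const _).comp continuous_fst)
        continuous_const
    apply IsClosed.inter
    · exact isClosed_eq ((continuous_eval_const _).comp continuous_snd)
        continuous_const
    · exact isClosed_eq ((continuous_eval_const _).comp continuous_snd)
        continuous_const
  haveI : CompleteSpace ↥Sset := hSclosed.completeSpace_coe
  haveI : Nonempty ↥Sset := by
    have h1ne : X1 N - X1 0 ≠ 0 := sub_ne_zero.mpr h1lt.ne'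
    have h2ne : X2 M - X2 0 ≠ 0 := sub_ne_zero.mpr h2lt.ne'
    refine ⟨⟨(ContinuousMap.mk (fun t : ↥I1 => dat1 0 + ((t : ℝ) - X1 0) *
        (dat1 N - dat1 0) / (X1 N - X1 0)) (by fun_prop),
      ContinuousMap.mk (fun t : ↥I2 => dat2 0 + ((t : ℝ) - X2 0) *
        (dat2 M - dat2 0) / (X2 M - X2 0)) (by fun_prop)), ?_, ?_, ?_, ?_⟩⟩
    · show dat1 0 + (X1 0 - X1 0) * (dat1 N - dat1 0) / (X1 N - X1 0) = dat1 0
      simp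
    · show dat1 0 + (X1 N - X1 0) * (dat1 N - dat1 0) / (X1 N - X1 0) = dat1 N
      field_simp
      ring
    · show dat2 0 + (X2 0 - X2 0) * (dat2 M - dat2 0) / (X2 M - X2 0) = dat2 0
      simp
    · show dat2 0 + (X2 M - X2 0) * (dat2 M - dat2 0) / (X2 M - X2 0) = dat2 M
      field_simp
      ring
  -- total extensions
  set ext1 : ↥Sset → ℝ → ℝ := fun p t => p.val.1 (projIcc (X1 0) (X1 N) h1le t) with hext1
  set ext2 : ↥Sset → ℝ → ℝ := fun p t => p.val.2 (projIcc (X2 0) (X2 M) h2le t) with hext2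
  have hext1c : ∀ p, Continuous (ext1 p) :=
    fun p => p.val.1.continuous.comp continuous_projIcc
  have hext2c : ∀ p, Continuous (ext2 p) :=
    fun p => p.val.2.continuous.comp continuous_projIcc
  have hext1v : ∀ p, ∀ t (ht : t ∈ I1), ext1 p t = p.val.1 ⟨t, ht⟩ := by
    intro p t ht; rw [hext1]; simp only; rw [projIcc_of_mem h1le ht]
  have hext2v : ∀ p, ∀ t (ht : t ∈ I2), ext2 p t = p.val.2 ⟨t, ht⟩ := by
    intro p t ht; rw [hext2]; simp only; rw [projIcc_of_mem h2le ht]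
  -- row applications
  have hrow1 : ∀ p : ↥Sset, ∃ g : ℝ → ℝ, Continuous g ∧
      (∀ n, 1 ≤ n → n ≤ K00 → ∀ t ∈ Icc (X1 0) (X1 N),
        A00 n * t + B00 n ∈ Icc (X1 0) (X1 N) ∧
        g (A00 n * t + B00 n) = Al00 n * ext1 p t + R00 n t) ∧
      (∀ n, 1 ≤ n → n ≤ K01 → ∀ t ∈ Icc (X2 0) (X2 M),
        A01 n * t + B01 n ∈ Icc (X1 0) (X1 N) ∧
        g (A01 n * t + B01 n) = Al01 n * ext2 p t + R01 n t) ∧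
      (∀ x ∈ Icc (X1 0) (X1 N),
        (∃ n, 1 ≤ n ∧ n ≤ K00 ∧ ∃ t ∈ Icc (X1 0) (X1 N), x = A00 n * t + B00 n) ∨
        (∃ n, 1 ≤ n ∧ n ≤ K01 ∧ ∃ t ∈ Icc (X2 0) (X2 M), x = A01 n * t + B01 n)) ∧
      g (X1 0) = dat1 0 ∧ g (X1 N) = dat1 N := by
    intro p
    obtain ⟨h10, h1N, h20, h2M⟩ := p.property
    refine myRow K00 K01 N hK1 hN X1 hX1 (X1 0) (X1 N) (X2 0) (X2 M) h1lt h2lt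
      A00 B00 Al00 A01 B01 Al01 R00 R01 dat1 (ext1 p) (ext2 p)
      (hext1c p) (hext2c p) hR00 hR01 ?_ ?_
    · intro n hn1 hn2
      obtain ⟨e0, e1, v0, v1⟩ := hj00 n hn1 hn2
      rw [hext1v p (X1 0) hm10, hext1v p (X1 N) hm1N, h10, h1N]
      exact ⟨e0, e1, v0, v1⟩
    · intro n hn1 hn2
      obtain ⟨e0, e1, v0, v1⟩ := hj01 n hn1 hn2
      rw [hext2v p (X2 0) hm20, hext2v p (X2 M) hm2M, h20, h2M]
      exact ⟨e0, e1, v0, v1⟩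
  have hrow2 : ∀ p : ↥Sset, ∃ g : ℝ → ℝ, Continuous g ∧
      (∀ n, 1 ≤ n → n ≤ K10 → ∀ t ∈ Icc (X1 0) (X1 N),
        A10 n * t + B10 n ∈ Icc (X2 0) (X2 M) ∧
        g (A10 n * t + B10 n) = Al10 n * ext1 p t + R10 n t) ∧
      (∀ n, 1 ≤ n → n ≤ K11 → ∀ t ∈ Icc (X2 0) (X2 M),
        A11 n * t + B11 n ∈ Icc (X2 0) (X2 M) ∧
        g (A11 n * t + B11 n) = Al11 n * ext2 p t + R11 n t) ∧
      (∀ x ∈ Icc (X2 0) (X2 M),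
        (∃ n, 1 ≤ n ∧ n ≤ K10 ∧ ∃ t ∈ Icc (X1 0) (X1 N), x = A10 n * t + B10 n) ∨
        (∃ n, 1 ≤ n ∧ n ≤ K11 ∧ ∃ t ∈ Icc (X2 0) (X2 M), x = A11 n * t + B11 n)) ∧
      g (X2 0) = dat2 0 ∧ g (X2 M) = dat2 M := by
    intro p
    obtain ⟨h10, h1N, h20, h2M⟩ := p.property
    refine myRow K10 K11 M hK2 hM X2 hX2 (X1 0) (X1 N) (X2 0) (X2 M) h1lt h2lt
      A10 B10 Al10 A11 B11 Al11 R10 R11 dat2 (ext1 p) (ext2 p)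
      (hext1c p) (hext2c p) hR10 hR11 ?_ ?_
    · intro n hn1 hn2
      obtain ⟨e0, e1, v0, v1⟩ := hj10 n hn1 hn2
      rw [hext1v p (X1 0) hm10, hext1v p (X1 N) hm1N, h10, h1N]
      exact ⟨e0, e1, v0, v1⟩
    · intro n hn1 hn2
      obtain ⟨e0, e1, v0, v1⟩ := hj11 n hn1 hn2
      rw [hext2v p (X2 0) hm20, hext2v p (X2 M) hm2M, h20, h2M]
      exact ⟨e0, e1, v0, v1⟩
  choose g1 hg1c hg1a hg1b hg1cov hg1l hg1r using hrow1
  choose g2 hg2c hg2a hg2b hg2cov hg2l hg2r using hrow2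
  -- the operator
  set Φ : ↥Sset → ↥Sset := fun p =>
    ⟨(ContinuousMap.mk (fun t : ↥I1 => g1 p t) ((hg1c p).comp continuous_subtype_val),
      ContinuousMap.mk (fun t : ↥I2 => g2 p t) ((hg2c p).comp continuous_subtype_val)),
      hg1l p, hg1r p, hg2l p, hg2r p⟩ with hΦ
  -- contraction
  have hdist1 : ∀ (p p' : ↥Sset) (t : ℝ), t ∈ I1 →
      dist (ext1 p t) (ext1 p' t) ≤ dist p p' := by
    intro p p' t ht
    rw [hext1v p t ht, hext1v p' t ht]
    calc dist (p.val.1 ⟨t, ht⟩) (p'.val.1 ⟨t, ht⟩) ≤ dist p.val.1 p'.val.1 :=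
          ContinuousMap.dist_apply_le_dist _
      _ ≤ dist p.val p'.val := by rw [Prod.dist_eq]; exact le_max_left _ _
      _ = dist p p' := (Subtype.dist_eq p p').symm
  have hdist2 : ∀ (p p' : ↥Sset) (t : ℝ), t ∈ I2 →
      dist (ext2 p t) (ext2 p' t) ≤ dist p p' := by
    intro p p' t ht
    rw [hext2v p t ht, hext2v p' t ht]
    calc dist (p.val.2 ⟨t, ht⟩) (p'.val.2 ⟨t, ht⟩) ≤ dist p.val.2 p'.val.2 :=
          ContinuousMap.dist_apply_le_dist _
      _ ≤ dist p.val p'.val := by rw [Prod.dist_eq]; exact le_max_right _ _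
      _ = dist p p' := (Subtype.dist_eq p p').symm
  have hkey : ∀ (Alc r u u' D : ℝ), |Alc| ≤ q → dist u u' ≤ D → 0 ≤ D →
      dist (Alc * u + r) (Alc * u' + r) ≤ q * D := by
    intro Alc r u u' D hA hd hD
    rw [Real.dist_eq] at hd ⊢
    have : Alc * u + r - (Alc * u' + r) = Alc * (u - u') := by ring
    rw [this, abs_mul]
    exact mul_le_mul hA hd (abs_nonneg _) hq0
  have hcontr : ContractingWith ⟨q, hq0⟩ Φ := by
    constructor
    · exact_mod_cast hq1
    · apply LipschitzWith.of_dist_le_mul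
      intro p p'
      show dist (Φ p) (Φ p') ≤ q * dist p p'
      have hD0 : (0 : ℝ) ≤ dist p p' := dist_nonneg
      have hqD0 : (0 : ℝ) ≤ q * dist p p' := mul_nonneg hq0 hD0
      rw [Subtype.dist_eq, Prod.dist_eq]
      apply max_le
      · rw [ContinuousMap.dist_le hqD0]
        intro x
        rcases hg1cov p x.val x.2 with ⟨n, hn1, hn2, t, ht, hxt⟩ |
          ⟨n, hn1, hn2, t, ht, hxt⟩
        · have e := (hg1a p n hn1 hn2 t ht).2
          have e' := (hg1a p' n hn1 hn2 t ht).2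
          show dist (g1 p x.val) (g1 p' x.val) ≤ q * dist p p'
          rw [hxt, e, e']
          exact hkey _ _ _ _ _ (hAl00 n hn1 hn2) (hdist1 p p' t ht) hD0
        · have e := (hg1b p n hn1 hn2 t ht).2
          have e' := (hg1b p' n hn1 hn2 t ht).2
          show dist (g1 p x.val) (g1 p' x.val) ≤ q * dist p p'
          rw [hxt, e, e']
          exact hkey _ _ _ _ _ (hAl01 n hn1 hn2) (hdist2 p p' t ht) hD0
      · rw [ContinuousMap.dist_le hqD0]
        intro x
        rcases hg2cov p x.val x.2 with ⟨n, hn1, hn2, t, ht, hxt⟩ |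
          ⟨n, hn1, hn2, t, ht, hxt⟩
        · have e := (hg2a p n hn1 hn2 t ht).2
          have e' := (hg2a p' n hn1 hn2 t ht).2
          show dist (g2 p x.val) (g2 p' x.val) ≤ q * dist p p'
          rw [hxt, e, e']
          exact hkey _ _ _ _ _ (hAl10 n hn1 hn2) (hdist1 p p' t ht) hD0
        · have e := (hg2b p n hn1 hn2 t ht).2
          have e' := (hg2b p' n hn1 hn2 t ht).2
          show dist (g2 p x.val) (g2 p' x.val) ≤ q * dist p p'
          rw [hxt, e, e']
          exact hkey _ _ _ _ _ (hAl11 n hn1 hn2) (hdist2 p p' t ht) hD0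
  -- fixed point
  set P : ↥Sset := hcontr.fixedPoint Φ with hP
  have hPfix : Φ P = P := hcontr.fixedPoint_isFixedPt
  set φ : ℝ → ℝ := ext1 P with hφ
  set ψ : ℝ → ℝ := ext2 P with hψ
  have hφfix : ∀ x (hx : x ∈ I1), g1 P x = φ x := by
    intro x hx
    have : (Φ P).val.1 ⟨x, hx⟩ = P.val.1 ⟨x, hx⟩ := by rw [hPfix]
    rw [hφ, hext1v P x hx]
    exact this
  have hψfix : ∀ x (hx : x ∈ I2), g2 P x = ψ x := by
    intro x hx
    have : (Φ P).val.2 ⟨x, hx⟩ = P.val.2 ⟨x, hx⟩ := by rw [hPfix]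
    rw [hψ, hext2v P x hx]
    exact this
  refine ⟨φ, ψ, hext1c P, hext2c P, ?_, ?_, ?_, ?_, ?_, ?_, ?_, ?_, hg1cov P, hg2cov P, ?_⟩
  · rw [hφ, hext1v P (X1 0) hm10]; exact P.property.1
  · rw [hφ, hext1v P (X1 N) hm1N]; exact P.property.2.1
  · rw [hψ, hext2v P (X2 0) hm20]; exact P.property.2.2.1
  · rw [hψ, hext2v P (X2 M) hm2M]; exact P.property.2.2.2
  · intro n hn1 hn2 t ht
    obtain ⟨hmem, heq⟩ := hg1a P n hn1 hn2 t ht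
    exact ⟨hmem, by rw [← hφfix _ hmem, heq, hext1v P t ht, hφ, hext1v P t ht]⟩
  · intro n hn1 hn2 t ht
    obtain ⟨hmem, heq⟩ := hg1b P n hn1 hn2 t ht
    exact ⟨hmem, by rw [← hφfix _ hmem, heq, hext2v P t ht, hψ, hext2v P t ht]⟩
  · intro n hn1 hn2 t ht
    obtain ⟨hmem, heq⟩ := hg2a P n hn1 hn2 t ht
    exact ⟨hmem, by rw [← hψfix _ hmem, heq, hext1v P t ht, hφ, hext1v P t ht]⟩
  · intro n hn1 hn2 t ht
    obtain ⟨hmem, heq⟩ := hg2b P n hn1 hn2 t ht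
    exact ⟨hmem, by rw [← hψfix _ hmem, heq, hext2v P t ht, hψ, hext2v P t ht]⟩
  -- uniqueness
  · intro φ' ψ' hφ'c hψ'c hφ'0 hφ'N hψ'0 hψ'M he00 he01 he10 he11
    set p' : ↥Sset := ⟨(ContinuousMap.mk (fun t : ↥I1 => φ' t) hφ'c.restrict,
      ContinuousMap.mk (fun t : ↥I2 => ψ' t) hψ'c.restrict),
      hφ'0, hφ'N, hψ'0, hψ'M⟩ with hp'
    have hext1p' : ∀ t (ht : t ∈ I1), ext1 p' t = φ' t := fun t ht => hext1v p' t ht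
    have hext2p' : ∀ t (ht : t ∈ I2), ext2 p' t = ψ' t := fun t ht => hext2v p' t ht
    have hp'fix : Φ p' = p' := by
      apply Subtype.ext
      apply Prod.ext
      · apply ContinuousMap.ext
        intro x
        show g1 p' x.val = φ' x.val
        rcases hg1cov p' x.val x.2 with ⟨n, hn1, hn2, t, ht, hxt⟩ |
          ⟨n, hn1, hn2, t, ht, hxt⟩
        · rw [hxt, (hg1a p' n hn1 hn2 t ht).2, hext1p' t ht, ← he00 n hn1 hn2 t ht]
        · rw [hxt, (hg1b p' n hn1 hn2 t ht).2, hext2p' t ht, ← he01 n hn1 hn2 t ht]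
      · apply ContinuousMap.ext
        intro x
        show g2 p' x.val = ψ' x.val
        rcases hg2cov p' x.val x.2 with ⟨n, hn1, hn2, t, ht, hxt⟩ |
          ⟨n, hn1, hn2, t, ht, hxt⟩
        · rw [hxt, (hg2a p' n hn1 hn2 t ht).2, hext1p' t ht, ← he10 n hn1 hn2 t ht]
        · rw [hxt, (hg2b p' n hn1 hn2 t ht).2, hext2p' t ht, ← he11 n hn1 hn2 t ht]
    have hp'P : p' = P := hcontr.fixedPoint_unique hp'fix
    constructor
    · intro x hx
      have : p'.val.1 ⟨x, hx⟩ = P.val.1 ⟨x, hx⟩ := by rw [hp'P]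
      rw [hφ, hext1v P x hx, ← this]
      rfl
    · intro x hx
      have : p'.val.2 ⟨x, hx⟩ = P.val.2 ⟨x, hx⟩ := by rw [hp'P]
      rw [hψ, hext2v P x hx, ← this]
      rfl

theorem stmt_8
    (N M : ℕ) (hN : 2 ≤ N) (hM : 2 ≤ M)
    (x1 y1 z1 x2 y2 z2 : ℕ → ℝ)
    (hx1 : ∀ i, i < N → x1 i < x1 (i + 1))
    (hx2 : ∀ j, j < M → x2 j < x2 (j + 1))
    (hstar1 : ∀ i, 1 ≤ i → i ≤ N → x1 i - x1 (i - 1) < x2 M - x2 0)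
    (hstar2 : ∀ j, 1 ≤ j → j ≤ M → x2 j - x2 (j - 1) < x1 N - x1 0)
    (K : Fin 2 → Fin 2 → ℕ)
    (hK1 : K 0 0 + K 0 1 = N) (hK2 : K 1 0 + K 1 1 = M)
    (a b c d e f α β γ : Fin 2 → Fin 2 → ℕ → ℝ)
    (hα : ∀ r s n, 1 ≤ n → n ≤ K r s → |α r s n| < 1)
    (hγ : ∀ r s n, 1 ≤ n → n ≤ K r s → |γ r s n| < 1)
    (hβγ : ∀ r s n, 1 ≤ n → n ≤ K r s → |β r s n| + |γ r s n| < 1)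
    (w : Fin 2 → Fin 2 → ℕ → ℝ × ℝ × ℝ → ℝ × ℝ × ℝ)
    (hw : ∀ r s n p, w r s n p =
      (a r s n * p.1 + b r s n,
       c r s n * p.1 + α r s n * p.2.1 + β r s n * p.2.2 + d r s n,
       e r s n * p.1 + γ r s n * p.2.2 + f r s n))
    (hj11 : ∀ n, 1 ≤ n → n ≤ K 0 0 →
      w 0 0 n (x1 0, y1 0, z1 0) = (x1 (n - 1), y1 (n - 1), z1 (n - 1)) ∧
      w 0 0 n (x1 N, y1 N, z1 N) = (x1 n, y1 n, z1 n))
    (hj12 : ∀ n, 1 ≤ n → n ≤ K 0 1 →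
      w 0 1 n (x2 0, y2 0, z2 0) =
        (x1 (K 0 0 + n - 1), y1 (K 0 0 + n - 1), z1 (K 0 0 + n - 1)) ∧
      w 0 1 n (x2 M, y2 M, z2 M) = (x1 (K 0 0 + n), y1 (K 0 0 + n), z1 (K 0 0 + n)))
    (hj21 : ∀ n, 1 ≤ n → n ≤ K 1 0 →
      w 1 0 n (x1 0, y1 0, z1 0) = (x2 (n - 1), y2 (n - 1), z2 (n - 1)) ∧
      w 1 0 n (x1 N, y1 N, z1 N) = (x2 n, y2 n, z2 n))
    (hj22 : ∀ n, 1 ≤ n → n ≤ K 1 1 →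
      w 1 1 n (x2 0, y2 0, z2 0) =
        (x2 (K 1 0 + n - 1), y2 (K 1 0 + n - 1), z2 (K 1 0 + n - 1)) ∧
      w 1 1 n (x2 M, y2 M, z2 M) = (x2 (K 1 0 + n), y2 (K 1 0 + n), z2 (K 1 0 + n)))
    (T : ((ℝ → ℝ × ℝ) × (ℝ → ℝ × ℝ)) → ((ℝ → ℝ × ℝ) × (ℝ → ℝ × ℝ)))
    (hT : ∀ u v : ℝ → ℝ × ℝ, (ContinuousOn u (Set.Icc (x1 0) (x1 N)) ∧ u (x1 0) = (y1 0, z1 0) ∧ u (x1 N) = (y1 N, z1 N)) → (ContinuousOn v (Set.Icc (x2 0) (x2 M)) ∧ v (x2 0) = (y2 0, z2 0) ∧ v (x2 M) = (y2 M, z2 M)) →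
      (∀ n, 1 ≤ n → n ≤ K 0 0 → ∀ x ∈ Set.Icc (x1 0) (x1 N),
      (T (u, v)).1 (a 0 0 n * x + b 0 0 n) =
        (c 0 0 n * x + α 0 0 n * (u x).1 + β 0 0 n * (u x).2 + d 0 0 n,
         e 0 0 n * x + γ 0 0 n * (u x).2 + f 0 0 n)) ∧
    (∀ n, 1 ≤ n → n ≤ K 0 1 → ∀ x ∈ Set.Icc (x2 0) (x2 M),
      (T (u, v)).1 (a 0 1 n * x + b 0 1 n) =
        (c 0 1 n * x + α 0 1 n * (v x).1 + β 0 1 n * (v x).2 + d 0 1 n,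
         e 0 1 n * x + γ 0 1 n * (v x).2 + f 0 1 n)) ∧
    (∀ n, 1 ≤ n → n ≤ K 1 0 → ∀ x ∈ Set.Icc (x1 0) (x1 N),
      (T (u, v)).2 (a 1 0 n * x + b 1 0 n) =
        (c 1 0 n * x + α 1 0 n * (u x).1 + β 1 0 n * (u x).2 + d 1 0 n,
         e 1 0 n * x + γ 1 0 n * (u x).2 + f 1 0 n)) ∧
    (∀ n, 1 ≤ n → n ≤ K 1 1 → ∀ x ∈ Set.Icc (x2 0) (x2 M),
      (T (u, v)).2 (a 1 1 n * x + b 1 1 n) =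
        (c 1 1 n * x + α 1 1 n * (v x).1 + β 1 1 n * (v x).2 + d 1 1 n,
         e 1 1 n * x + γ 1 1 n * (v x).2 + f 1 1 n))) :
    ∃ f0 h0 : ℝ → ℝ × ℝ,
      (ContinuousOn f0 (Set.Icc (x1 0) (x1 N)) ∧ f0 (x1 0) = (y1 0, z1 0) ∧ f0 (x1 N) = (y1 N, z1 N)) ∧
      (ContinuousOn h0 (Set.Icc (x2 0) (x2 M)) ∧ h0 (x2 0) = (y2 0, z2 0) ∧ h0 (x2 M) = (y2 M, z2 M)) ∧
      (∀ x ∈ Set.Icc (x1 0) (x1 N), (T (f0, h0)).1 x = f0 x) ∧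
      (∀ x ∈ Set.Icc (x2 0) (x2 M), (T (f0, h0)).2 x = h0 x) ∧
      ∀ f0' h0' : ℝ → ℝ × ℝ,
        (ContinuousOn f0' (Set.Icc (x1 0) (x1 N)) ∧ f0' (x1 0) = (y1 0, z1 0) ∧ f0' (x1 N) = (y1 N, z1 N)) →
        (ContinuousOn h0' (Set.Icc (x2 0) (x2 M)) ∧ h0' (x2 0) = (y2 0, z2 0) ∧ h0' (x2 M) = (y2 M, z2 M)) →
        (∀ x ∈ Set.Icc (x1 0) (x1 N), (T (f0', h0')).1 x = f0' x) →
        (∀ x ∈ Set.Icc (x2 0) (x2 M), (T (f0', h0')).2 x = h0' x) →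
        (∀ x ∈ Set.Icc (x1 0) (x1 N), f0' x = f0 x) ∧ (∀ x ∈ Set.Icc (x2 0) (x2 M), h0' x = h0 x) := by
  classical
  -- scalar join equations
  have hs00 : ∀ n, 1 ≤ n → n ≤ K 0 0 →
      a 0 0 n * x1 0 + b 0 0 n = x1 (n - 1) ∧ a 0 0 n * x1 N + b 0 0 n = x1 n ∧
      c 0 0 n * x1 0 + α 0 0 n * y1 0 + β 0 0 n * z1 0 + d 0 0 n = y1 (n - 1) ∧
      c 0 0 n * x1 N + α 0 0 n * y1 N + β 0 0 n * z1 N + d 0 0 n = y1 n ∧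
      e 0 0 n * x1 0 + γ 0 0 n * z1 0 + f 0 0 n = z1 (n - 1) ∧
      e 0 0 n * x1 N + γ 0 0 n * z1 N + f 0 0 n = z1 n := by
    intro n h1 h2
    obtain ⟨H1, H2⟩ := hj11 n h1 h2
    rw [hw] at H1 H2
    simp only [Prod.mk.injEq] at H1 H2
    exact ⟨H1.1, H2.1, H1.2.1, H2.2.1, H1.2.2, H2.2.2⟩
  have hs01 : ∀ n, 1 ≤ n → n ≤ K 0 1 →
      a 0 1 n * x2 0 + b 0 1 n = x1 (K 0 0 + n - 1) ∧ a 0 1 n * x2 M + b 0 1 n = x1 (K 0 0 + n) ∧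
      c 0 1 n * x2 0 + α 0 1 n * y2 0 + β 0 1 n * z2 0 + d 0 1 n = y1 (K 0 0 + n - 1) ∧
      c 0 1 n * x2 M + α 0 1 n * y2 M + β 0 1 n * z2 M + d 0 1 n = y1 (K 0 0 + n) ∧
      e 0 1 n * x2 0 + γ 0 1 n * z2 0 + f 0 1 n = z1 (K 0 0 + n - 1) ∧
      e 0 1 n * x2 M + γ 0 1 n * z2 M + f 0 1 n = z1 (K 0 0 + n) := by
    intro n h1 h2
    obtain ⟨H1, H2⟩ := hj12 n h1 h2
    rw [hw] at H1 H2
    simp only [Prod.mk.injEq] at H1 H2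
    exact ⟨H1.1, H2.1, H1.2.1, H2.2.1, H1.2.2, H2.2.2⟩
  have hs10 : ∀ n, 1 ≤ n → n ≤ K 1 0 →
      a 1 0 n * x1 0 + b 1 0 n = x2 (n - 1) ∧ a 1 0 n * x1 N + b 1 0 n = x2 n ∧
      c 1 0 n * x1 0 + α 1 0 n * y1 0 + β 1 0 n * z1 0 + d 1 0 n = y2 (n - 1) ∧
      c 1 0 n * x1 N + α 1 0 n * y1 N + β 1 0 n * z1 N + d 1 0 n = y2 n ∧
      e 1 0 n * x1 0 + γ 1 0 n * z1 0 + f 1 0 n = z2 (n - 1) ∧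
      e 1 0 n * x1 N + γ 1 0 n * z1 N + f 1 0 n = z2 n := by
    intro n h1 h2
    obtain ⟨H1, H2⟩ := hj21 n h1 h2
    rw [hw] at H1 H2
    simp only [Prod.mk.injEq] at H1 H2
    exact ⟨H1.1, H2.1, H1.2.1, H2.2.1, H1.2.2, H2.2.2⟩
  have hs11 : ∀ n, 1 ≤ n → n ≤ K 1 1 →
      a 1 1 n * x2 0 + b 1 1 n = x2 (K 1 0 + n - 1) ∧ a 1 1 n * x2 M + b 1 1 n = x2 (K 1 0 + n) ∧
      c 1 1 n * x2 0 + α 1 1 n * y2 0 + β 1 1 n * z2 0 + d 1 1 n = y2 (K 1 0 + n - 1) ∧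
      c 1 1 n * x2 M + α 1 1 n * y2 M + β 1 1 n * z2 M + d 1 1 n = y2 (K 1 0 + n) ∧
      e 1 1 n * x2 0 + γ 1 1 n * z2 0 + f 1 1 n = z2 (K 1 0 + n - 1) ∧
      e 1 1 n * x2 M + γ 1 1 n * z2 M + f 1 1 n = z2 (K 1 0 + n) := by
    intro n h1 h2
    obtain ⟨H1, H2⟩ := hj22 n h1 h2
    rw [hw] at H1 H2
    simp only [Prod.mk.injEq] at H1 H2
    exact ⟨H1.1, H2.1, H1.2.1, H2.2.1, H1.2.2, H2.2.2⟩
  -- contraction constants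
  obtain ⟨qz, hqz0, hqz1, hqzb⟩ := mySup N M (by omega) (by omega) γ K
    (by omega) (by omega) (by omega) (by omega) hγ
  obtain ⟨qy, hqy0, hqy1, hqyb⟩ := mySup N M (by omega) (by omega) α K
    (by omega) (by omega) (by omega) (by omega) hα
  -- z-system
  obtain ⟨φz, ψz, hφzc, hψzc, hφz0, hφzN, hψz0, hψzM, hz00, hz01, hz10, hz11,
      hzcov1, hzcov2, hzuniq⟩ :=
    myBanach N M (by omega) (by omega) x1 x2 hx1 hx2
      (K 0 0) (K 0 1) (K 1 0) (K 1 1) hK1 hK2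
      (a 0 0) (b 0 0) (γ 0 0) (a 0 1) (b 0 1) (γ 0 1)
      (a 1 0) (b 1 0) (γ 1 0) (a 1 1) (b 1 1) (γ 1 1)
      (fun n t => e 0 0 n * t + f 0 0 n) (fun n t => e 0 1 n * t + f 0 1 n)
      (fun n t => e 1 0 n * t + f 1 0 n) (fun n t => e 1 1 n * t + f 1 1 n)
      (fun n => by fun_prop) (fun n => by fun_prop) (fun n => by fun_prop)
      (fun n => by fun_prop)
      qz hqz0 hqz1 (fun n h1 h2 => hqzb 0 0 n h1 h2) (fun n h1 h2 => hqzb 0 1 n h1 h2)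
      (fun n h1 h2 => hqzb 1 0 n h1 h2) (fun n h1 h2 => hqzb 1 1 n h1 h2)
      z1 z2
      (fun n h1 h2 => by
        obtain ⟨e0, e1, _, _, v0, v1⟩ := hs00 n h1 h2
        refine ⟨e0, e1, ?_, ?_⟩ <;> · beta_reduce; linarith)
      (fun n h1 h2 => by
        obtain ⟨e0, e1, _, _, v0, v1⟩ := hs01 n h1 h2
        refine ⟨e0, e1, ?_, ?_⟩ <;> · beta_reduce; linarith)
      (fun n h1 h2 => by
        obtain ⟨e0, e1, _, _, v0, v1⟩ := hs10 n h1 h2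
        refine ⟨e0, e1, ?_, ?_⟩ <;> · beta_reduce; linarith)
      (fun n h1 h2 => by
        obtain ⟨e0, e1, _, _, v0, v1⟩ := hs11 n h1 h2
        refine ⟨e0, e1, ?_, ?_⟩ <;> · beta_reduce; linarith)
  -- y-system
  obtain ⟨φy, ψy, hφyc, hψyc, hφy0, hφyN, hψy0, hψyM, hy00, hy01, hy10, hy11,
      hycov1, hycov2, hyuniq⟩ :=
    myBanach N M (by omega) (by omega) x1 x2 hx1 hx2
      (K 0 0) (K 0 1) (K 1 0) (K 1 1) hK1 hK2
      (a 0 0) (b 0 0) (α 0 0) (a 0 1) (b 0 1) (α 0 1)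
      (a 1 0) (b 1 0) (α 1 0) (a 1 1) (b 1 1) (α 1 1)
      (fun n t => c 0 0 n * t + β 0 0 n * φz t + d 0 0 n)
      (fun n t => c 0 1 n * t + β 0 1 n * ψz t + d 0 1 n)
      (fun n t => c 1 0 n * t + β 1 0 n * φz t + d 1 0 n)
      (fun n t => c 1 1 n * t + β 1 1 n * ψz t + d 1 1 n)
      (fun n => by fun_prop) (fun n => by fun_prop) (fun n => by fun_prop)
      (fun n => by fun_prop)
      qy hqy0 hqy1 (fun n h1 h2 => hqyb 0 0 n h1 h2) (fun n h1 h2 => hqyb 0 1 n h1 h2)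
      (fun n h1 h2 => hqyb 1 0 n h1 h2) (fun n h1 h2 => hqyb 1 1 n h1 h2)
      y1 y2
      (fun n h1 h2 => by
        obtain ⟨e0, e1, v0, v1, _, _⟩ := hs00 n h1 h2
        beta_reduce
        rw [hφz0, hφzN]
        refine ⟨e0, e1, ?_, ?_⟩ <;> linarith)
      (fun n h1 h2 => by
        obtain ⟨e0, e1, v0, v1, _, _⟩ := hs01 n h1 h2
        beta_reduce
        rw [hψz0, hψzM]
        refine ⟨e0, e1, ?_, ?_⟩ <;> linarith)
      (fun n h1 h2 => by
        obtain ⟨e0, e1, v0, v1, _, _⟩ := hs10 n h1 h2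
        beta_reduce
        rw [hφz0, hφzN]
        refine ⟨e0, e1, ?_, ?_⟩ <;> linarith)
      (fun n h1 h2 => by
        obtain ⟨e0, e1, v0, v1, _, _⟩ := hs11 n h1 h2
        beta_reduce
        rw [hψz0, hψzM]
        refine ⟨e0, e1, ?_, ?_⟩ <;> linarith)
  -- the fixed functions
  refine ⟨fun x => (φy x, φz x), fun x => (ψy x, ψz x), ?_, ?_, ?_, ?_, ?_⟩
  · exact ⟨(hφyc.prodMk hφzc).continuousOn,
      by rw [Prod.mk.injEq]; exact ⟨hφy0, hφz0⟩,
      by rw [Prod.mk.injEq]; exact ⟨hφyN, hφzN⟩⟩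
  · exact ⟨(hψyc.prodMk hψzc).continuousOn,
      by rw [Prod.mk.injEq]; exact ⟨hψy0, hψz0⟩,
      by rw [Prod.mk.injEq]; exact ⟨hψyM, hψzM⟩⟩
  · -- fixed point equation, first component
    obtain ⟨heq1, heq2, heq3, heq4⟩ := hT (fun x => (φy x, φz x)) (fun x => (ψy x, ψz x))
      ⟨(hφyc.prodMk hφzc).continuousOn,
        by rw [Prod.mk.injEq]; exact ⟨hφy0, hφz0⟩,
        by rw [Prod.mk.injEq]; exact ⟨hφyN, hφzN⟩⟩
      ⟨(hψyc.prodMk hψzc).continuousOn,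
        by rw [Prod.mk.injEq]; exact ⟨hψy0, hψz0⟩,
        by rw [Prod.mk.injEq]; exact ⟨hψyM, hψzM⟩⟩
    intro x hx
    rcases hzcov1 x hx with ⟨n, hn1, hn2, t, ht, hxt⟩ | ⟨n, hn1, hn2, t, ht, hxt⟩
    · have h1 := (hy00 n hn1 hn2 t ht).2
      have h2 := (hz00 n hn1 hn2 t ht).2
      rw [hxt, heq1 n hn1 hn2 t ht]
      show (c 0 0 n * t + α 0 0 n * φy t + β 0 0 n * φz t + d 0 0 n,
            e 0 0 n * t + γ 0 0 n * φz t + f 0 0 n) =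
        (φy (a 0 0 n * t + b 0 0 n), φz (a 0 0 n * t + b 0 0 n))
      rw [h1, h2, Prod.mk.injEq]
      constructor <;> ring
    · have h1 := (hy01 n hn1 hn2 t ht).2
      have h2 := (hz01 n hn1 hn2 t ht).2
      rw [hxt, heq2 n hn1 hn2 t ht]
      show (c 0 1 n * t + α 0 1 n * ψy t + β 0 1 n * ψz t + d 0 1 n,
            e 0 1 n * t + γ 0 1 n * ψz t + f 0 1 n) =
        (φy (a 0 1 n * t + b 0 1 n), φz (a 0 1 n * t + b 0 1 n))
      rw [h1, h2, Prod.mk.injEq]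
      constructor <;> ring
  · -- fixed point equation, second component
    obtain ⟨heq1, heq2, heq3, heq4⟩ := hT (fun x => (φy x, φz x)) (fun x => (ψy x, ψz x))
      ⟨(hφyc.prodMk hφzc).continuousOn,
        by rw [Prod.mk.injEq]; exact ⟨hφy0, hφz0⟩,
        by rw [Prod.mk.injEq]; exact ⟨hφyN, hφzN⟩⟩
      ⟨(hψyc.prodMk hψzc).continuousOn,
        by rw [Prod.mk.injEq]; exact ⟨hψy0, hψz0⟩,
        by rw [Prod.mk.injEq]; exact ⟨hψyM, hψzM⟩⟩
    intro x hx
    rcases hzcov2 x hx with ⟨n, hn1, hn2, t, ht, hxt⟩ | ⟨n, hn1, hn2, t, ht, hxt⟩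
    · have h1 := (hy10 n hn1 hn2 t ht).2
      have h2 := (hz10 n hn1 hn2 t ht).2
      rw [hxt, heq3 n hn1 hn2 t ht]
      show (c 1 0 n * t + α 1 0 n * φy t + β 1 0 n * φz t + d 1 0 n,
            e 1 0 n * t + γ 1 0 n * φz t + f 1 0 n) =
        (ψy (a 1 0 n * t + b 1 0 n), ψz (a 1 0 n * t + b 1 0 n))
      rw [h1, h2, Prod.mk.injEq]
      constructor <;> ring
    · have h1 := (hy11 n hn1 hn2 t ht).2
      have h2 := (hz11 n hn1 hn2 t ht).2
      rw [hxt, heq4 n hn1 hn2 t ht]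
      show (c 1 1 n * t + α 1 1 n * ψy t + β 1 1 n * ψz t + d 1 1 n,
            e 1 1 n * t + γ 1 1 n * ψz t + f 1 1 n) =
        (ψy (a 1 1 n * t + b 1 1 n), ψz (a 1 1 n * t + b 1 1 n))
      rw [h1, h2, Prod.mk.injEq]
      constructor <;> ring
  · -- uniqueness
    intro f0' h0' Pf' Ph' hfix1' hfix2'
    obtain ⟨heq1', heq2', heq3', heq4'⟩ := hT f0' h0' Pf' Ph'
    -- z-components agree
    obtain ⟨hzu1, hzu2⟩ := hzuniq (fun x => (f0' x).2) (fun x => (h0' x).2)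
      (continuous_snd.comp_continuousOn Pf'.1) (continuous_snd.comp_continuousOn Ph'.1)
      (by show (f0' (x1 0)).2 = z1 0; rw [Pf'.2.1])
      (by show (f0' (x1 N)).2 = z1 N; rw [Pf'.2.2])
      (by show (h0' (x2 0)).2 = z2 0; rw [Ph'.2.1])
      (by show (h0' (x2 M)).2 = z2 M; rw [Ph'.2.2])
      (fun n hn1 hn2 t ht => by
        have hmem := (hz00 n hn1 hn2 t ht).1
        have h := heq1' n hn1 hn2 t ht
        rw [hfix1' _ hmem] at h
        show (f0' (a 0 0 n * t + b 0 0 n)).2 = γ 0 0 n * (f0' t).2 + (e 0 0 n * t + f 0 0 n)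
        rw [h]
        show e 0 0 n * t + γ 0 0 n * (f0' t).2 + f 0 0 n = _
        ring)
      (fun n hn1 hn2 t ht => by
        have hmem := (hz01 n hn1 hn2 t ht).1
        have h := heq2' n hn1 hn2 t ht
        rw [hfix1' _ hmem] at h
        show (f0' (a 0 1 n * t + b 0 1 n)).2 = γ 0 1 n * (h0' t).2 + (e 0 1 n * t + f 0 1 n)
        rw [h]
        show e 0 1 n * t + γ 0 1 n * (h0' t).2 + f 0 1 n = _
        ring)
      (fun n hn1 hn2 t ht => by
        have hmem := (hz10 n hn1 hn2 t ht).1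
        have h := heq3' n hn1 hn2 t ht
        rw [hfix2' _ hmem] at h
        show (h0' (a 1 0 n * t + b 1 0 n)).2 = γ 1 0 n * (f0' t).2 + (e 1 0 n * t + f 1 0 n)
        rw [h]
        show e 1 0 n * t + γ 1 0 n * (f0' t).2 + f 1 0 n = _
        ring)
      (fun n hn1 hn2 t ht => by
        have hmem := (hz11 n hn1 hn2 t ht).1
        have h := heq4' n hn1 hn2 t ht
        rw [hfix2' _ hmem] at h
        show (h0' (a 1 1 n * t + b 1 1 n)).2 = γ 1 1 n * (h0' t).2 + (e 1 1 n * t + f 1 1 n)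
        rw [h]
        show e 1 1 n * t + γ 1 1 n * (h0' t).2 + f 1 1 n = _
        ring)
    -- y-components agree
    obtain ⟨hyu1, hyu2⟩ := hyuniq (fun x => (f0' x).1) (fun x => (h0' x).1)
      (continuous_fst.comp_continuousOn Pf'.1) (continuous_fst.comp_continuousOn Ph'.1)
      (by show (f0' (x1 0)).1 = y1 0; rw [Pf'.2.1])
      (by show (f0' (x1 N)).1 = y1 N; rw [Pf'.2.2])
      (by show (h0' (x2 0)).1 = y2 0; rw [Ph'.2.1])
      (by show (h0' (x2 M)).1 = y2 M; rw [Ph'.2.2])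
      (fun n hn1 hn2 t ht => by
        have hmem := (hz00 n hn1 hn2 t ht).1
        have h := heq1' n hn1 hn2 t ht
        rw [hfix1' _ hmem] at h
        show (f0' (a 0 0 n * t + b 0 0 n)).1 =
          α 0 0 n * (f0' t).1 + (c 0 0 n * t + β 0 0 n * φz t + d 0 0 n)
        rw [h]
        show c 0 0 n * t + α 0 0 n * (f0' t).1 + β 0 0 n * (f0' t).2 + d 0 0 n = _
        rw [(hzu1 t ht : (f0' t).2 = φz t)]
        ring)
      (fun n hn1 hn2 t ht => by
        have hmem := (hz01 n hn1 hn2 t ht).1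
        have h := heq2' n hn1 hn2 t ht
        rw [hfix1' _ hmem] at h
        show (f0' (a 0 1 n * t + b 0 1 n)).1 =
          α 0 1 n * (h0' t).1 + (c 0 1 n * t + β 0 1 n * ψz t + d 0 1 n)
        rw [h]
        show c 0 1 n * t + α 0 1 n * (h0' t).1 + β 0 1 n * (h0' t).2 + d 0 1 n = _
        rw [(hzu2 t ht : (h0' t).2 = ψz t)]
        ring)
      (fun n hn1 hn2 t ht => by
        have hmem := (hz10 n hn1 hn2 t ht).1
        have h := heq3' n hn1 hn2 t ht
        rw [hfix2' _ hmem] at h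
        show (h0' (a 1 0 n * t + b 1 0 n)).1 =
          α 1 0 n * (f0' t).1 + (c 1 0 n * t + β 1 0 n * φz t + d 1 0 n)
        rw [h]
        show c 1 0 n * t + α 1 0 n * (f0' t).1 + β 1 0 n * (f0' t).2 + d 1 0 n = _
        rw [(hzu1 t ht : (f0' t).2 = φz t)]
        ring)
      (fun n hn1 hn2 t ht => by
        have hmem := (hz11 n hn1 hn2 t ht).1
        have h := heq4' n hn1 hn2 t ht
        rw [hfix2' _ hmem] at h
        show (h0' (a 1 1 n * t + b 1 1 n)).1 =
          α 1 1 n * (h0' t).1 + (c 1 1 n * t + β 1 1 n * ψz t + d 1 1 n)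
        rw [h]
        show c 1 1 n * t + α 1 1 n * (h0' t).1 + β 1 1 n * (h0' t).2 + d 1 1 n = _
        rw [(hzu2 t ht : (h0' t).2 = ψz t)]
        ring)
    constructor
    · intro x hx
      rw [Prod.ext_iff]
      exact ⟨hyu1 x hx, hzu1 x hx⟩
    · intro x hx
      rw [Prod.ext_iff]
      exact ⟨hyu2 x hx, hzu2 x hx⟩
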